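/- Fix x ∈ ℝⁿ with ∇V(x) ≠ 0 and γ > 0, and define HJ(f,G,h) = ∇Vᵀf + (1/(2γ²))‖Gᵀ∇V‖² + (1/2)‖h‖² (pointwise at x). Given f_n ∈ ℝⁿ, and letting f_m = f_n − (1/‖∇V‖²)·R(HJ(f_n,G,h))·∇V with R the ramp function, then: (i) HJ(f_m, G, h) ≤ 0, and (ii) f_m minimizes ‖f − f_n‖ among all f ∈ ℝⁿ with HJ(f, G, h) ≤ 0. -/

import Mathlib

open Matrix

lemma dp_self_nonneg {n : ℕ} (v : Fin n → ℝ) : 0 ≤ v ⬝ᵥ v :=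
  Finset.sum_nonneg fun i _ => mul_self_nonneg (v i)

lemma dp_cs {n : ℕ} (β v : Fin n → ℝ) :
    (β ⬝ᵥ v) ^ 2 ≤ (β ⬝ᵥ β) * (v ⬝ᵥ v) := by
  have := Finset.sum_mul_sq_le_sq_mul_sq Finset.univ β v
  simpa [dotProduct, sq] using this

/-- Projection of f_n onto the half-space {f : HJ(f,G,h) ≤ 0}, where
HJ(f,G,h) = ∇Vᵀf + (1/(2γ²))‖Gᵀ∇V‖² + (1/2)‖h‖² (at a fixed point, β = ∇V ≠ 0).
f_m := f_n − (1/‖β‖²)·R(HJ(f_n,G,h))·β satisfies HJ(f_m,G,h) ≤ 0 and minimizes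
the distance ‖f − f_n‖ over feasible f (equivalently, squared distance). -/
theorem stmt7 {n m l : ℕ} (β : Fin n → ℝ) (hβ : β ≠ 0)
    (G : Matrix (Fin n) (Fin m) ℝ) (h : Fin l → ℝ) (γ : ℝ) (hγ : 0 < γ)
    (fn : Fin n → ℝ) :
    let HJ : (Fin n → ℝ) → ℝ := fun f =>
      β ⬝ᵥ f + (1 / (2 * γ ^ 2)) * ((Gᵀ *ᵥ β) ⬝ᵥ (Gᵀ *ᵥ β)) + (1 / 2) * (h ⬝ᵥ h)
    let fm : Fin n → ℝ := fn - ((1 / (β ⬝ᵥ β)) * max (HJ fn) 0) • β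
    HJ fm ≤ 0 ∧
    ∀ f : Fin n → ℝ, HJ f ≤ 0 → (fm - fn) ⬝ᵥ (fm - fn) ≤ (f - fn) ⬝ᵥ (f - fn) := by
  intro HJ fm
  set b := β ⬝ᵥ β with hbdef
  have hb : 0 < b := by
    rcases (dp_self_nonneg β).lt_or_eq with hlt | heq
    · exact hlt
    · exact absurd ((dotProduct_self_eq_zero (v := β)).mp heq.symm) hβ
  set t := max (HJ fn) 0 with htdef
  have ht0 : 0 ≤ t := le_max_right _ _
  have key : β ⬝ᵥ fm = β ⬝ᵥ fn - t := by
    show β ⬝ᵥ (fn - ((1 / b) * t) • β) = _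
    rw [dotProduct_sub, dotProduct_smul]
    simp only [smul_eq_mul, ← hbdef]
    field_simp
  have hfm : HJ fm = HJ fn - t := by
    simp only [HJ]
    rw [key]
    ring
  constructor
  · rw [hfm]
    have := le_max_left (HJ fn) 0
    linarith
  · intro f hf
    have hleft : (fm - fn) ⬝ᵥ (fm - fn) = t ^ 2 / b := by
      have : fm - fn = -(((1 / b) * t) • β) := by
        simp [fm, sub_sub_cancel_left]
        rfl
      rw [this]
      rw [neg_dotProduct, dotProduct_neg, neg_neg, smul_dotProduct, dotProduct_smul]
      simp only [smul_eq_mul, ← hbdef]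
      field_simp
    rw [hleft]
    set v := f - fn with hv
    have hbv : β ⬝ᵥ v = HJ f - HJ fn := by
      simp only [HJ, hv, dotProduct_sub]; ring
    have h1 : HJ fn ≤ -(β ⬝ᵥ v) := by rw [hbv]; linarith
    have h2 : t ≤ max (-(β ⬝ᵥ v)) 0 := max_le_max h1 le_rfl
    have h3 : t ^ 2 ≤ (β ⬝ᵥ v) ^ 2 := by
      have : (max (-(β ⬝ᵥ v)) 0) ^ 2 ≤ (β ⬝ᵥ v) ^ 2 := by
        rcases le_total (-(β ⬝ᵥ v)) 0 with hc | hc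
        · simp [max_eq_right hc, sq_nonneg]
        · rw [max_eq_left hc, neg_pow]
          simp
      calc t ^ 2 ≤ (max (-(β ⬝ᵥ v)) 0) ^ 2 := by
            apply pow_le_pow_left₀ ht0 h2
        _ ≤ _ := this
    have h4 : (β ⬝ᵥ v) ^ 2 ≤ b * (v ⬝ᵥ v) := dp_cs β v
    rw [div_le_iff₀ hb]
    calc t ^ 2 ≤ b * (v ⬝ᵥ v) := le_trans h3 h4
      _ = (v ⬝ᵥ v) * b := mul_comm _ _
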